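/- Let λ be a singular cardinal of uncountable cofinality κ, let ⟨λ_i : i < κ⟩ be an increasing continuous sequence of cardinals with supremum λ, and let D be the club filter on κ. Then every ordinal α < λ⁺ is of the form rk_D(f) for some f ∈ ∏_{i<κ} λ_i⁺ (i.e. some f : κ → Ord with f(i) < λ_i⁺ for all i); in particular rk_D(⟨λ_i⁺ : i < κ⟩) ≥ λ⁺. -/

import Mathlib

/-- `f <_D g` iff `{y | f y < g y} ∈ D`. -/
def ltD {Y : Type 1} (D : Filter Y) (f g : Y → Ordinal.{0}) : Prop :=
  {y | f y < g y} ∈ D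

/-- The rank `rk_D f` of `f : Y → Ord` with respect to the (well-founded, for countably
complete `D`) relation `<_D`. -/
noncomputable def rkD {Y : Type 1} (D : Filter Y) (f : Y → Ordinal.{0}) : Ordinal.{1} :=
  haveI := Classical.dec
  if h : Acc (ltD D) f then h.rank else 0

/-- `C` is a club (closed unbounded set) in the ordinal `k`. -/
def IsClubIn (C : Set Ordinal) (k : Ordinal) : Prop :=
  C ⊆ Set.Iio k ∧ (∀ β < k, ∃ γ ∈ C, β ≤ γ) ∧
    ∀ δ < k, Order.IsSuccLimit δ → (∀ β < δ, ∃ γ ∈ C, β < γ ∧ γ < δ) → δ ∈ C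

/-- The club filter on (the set of ordinals below) `k`: the filter generated by the
closed unbounded subsets of `k`. -/
def clubFilter (k : Ordinal) : Filter ↥(Set.Iio k) :=
  Filter.generate {S : Set ↥(Set.Iio k) |
    ∃ C : Set Ordinal, IsClubIn C k ∧ S = {x : ↥(Set.Iio k) | ↑x ∈ C}}

open Ordinal Set

section Clubs

variable {k : Ordinal.{0}}

lemma isClubIn_Iio (k : Ordinal) : IsClubIn (Set.Iio k) k :=
  ⟨subset_rfl, fun β hβ => ⟨β, hβ, le_rfl⟩, fun δ hδ _ _ => hδ⟩

lemma isClubIn_iInter (hcof : Cardinal.aleph0 < k.cof) (C : ℕ → Set Ordinal)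
    (hC : ∀ n, IsClubIn (C n) k) : IsClubIn (⋂ n, C n) k := by
  have hk : Order.IsSuccLimit k := Ordinal.aleph0_le_cof.1 hcof.le
  -- a choice function producing an element of `C n` strictly above `β`, below `k`
  have hEx : ∀ (n : ℕ) (β : Ordinal), β < k → ∃ γ, γ ∈ C n ∧ β < γ ∧ γ < k := by
    intro n β hβ
    obtain ⟨γ, hγC, hγge⟩ := (hC n).2.1 (Order.succ β) (hk.succ_lt hβ)
    exact ⟨γ, hγC, (Order.lt_succ β).trans_le hγge, (hC n).1 hγC⟩
  classical
  set e : ℕ → Ordinal → Ordinal := fun n β =>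
    if h : β < k then (hEx n β h).choose else 0 with he
  have heSpec : ∀ n β (h : β < k), e n β ∈ C n ∧ β < e n β ∧ e n β < k := by
    intro n β h
    simp only [he, dif_pos h]
    exact ⟨(hEx n β h).choose_spec.1, (hEx n β h).choose_spec.2.1, (hEx n β h).choose_spec.2.2⟩
  -- step function
  set step : Ordinal → Ordinal := fun β => ⨆ n, e n β with hstep
  have hstep_lt : ∀ β, β < k → step β < k := by
    intro β hβ
    refine Ordinal.iSup_lt_ord ?_ fun n => (heSpec n β hβ).2.2
    rwa [Cardinal.mk_nat]
  have hstep_gt : ∀ β, β < k → β < step β := fun β hβ =>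
    (heSpec 0 β hβ).2.1.trans_le (Ordinal.le_iSup (fun n => e n β) 0)
  constructor
  · exact (iInter_subset C 0).trans (hC 0).1
  constructor
  · -- unbounded
    intro β hβ
    set γs : ℕ → Ordinal := fun m => Nat.rec β (fun _ ih => step ih) m with hγs
    have hγs_lt : ∀ m, γs m < k := by
      intro m; induction m with
      | zero => exact hβ
      | succ m ih => exact hstep_lt _ ih
    have hγs_mono : ∀ m, γs m < γs (m + 1) := fun m => hstep_gt _ (hγs_lt m)
    set δ : Ordinal := ⨆ m, γs m with hδdef
    have hδk : δ < k := by
      refine Ordinal.iSup_lt_ord ?_ hγs_lt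
      rwa [Cardinal.mk_nat]
    have hle : ∀ m, γs m ≤ δ := fun m => Ordinal.le_iSup γs m
    have hβδ : β ≤ δ := hle 0
    have hδlim : Order.IsSuccLimit δ := by
      rw [Ordinal.isSuccLimit_iff, Order.isSuccPrelimit_iff_succ_lt]
      constructor
      · intro h0
        have := (hγs_mono 0).trans_le (hle 1)
        rw [h0] at this
        exact (not_lt_of_ge zero_le) this
      · intro a ha
        obtain ⟨m, hm⟩ := Ordinal.lt_iSup_iff.1 ha
        have : Order.succ a ≤ γs m := Order.succ_le_of_lt hm
        exact this.trans_lt ((hγs_mono m).trans_le (hle (m + 1)))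
    refine ⟨δ, ?_, hβδ⟩
    rw [mem_iInter]
    intro n
    refine (hC n).2.2 δ hδk hδlim ?_
    intro x hx
    obtain ⟨m, hm⟩ := Ordinal.lt_iSup_iff.1 hx
    refine ⟨e n (γs m), (heSpec n _ (hγs_lt m)).1, hm.trans (heSpec n _ (hγs_lt m)).2.1, ?_⟩
    have h1 : e n (γs m) ≤ γs (m + 1) := Ordinal.le_iSup (fun n' => e n' (γs m)) n
    exact h1.trans_lt ((hγs_mono (m + 1)).trans_le (hle (m + 2)))
  · -- closed
    intro δ hδk hδlim hdense
    rw [mem_iInter]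
    intro n
    refine (hC n).2.2 δ hδk hδlim ?_
    intro β hβ
    obtain ⟨γ, hγ, h1, h2⟩ := hdense β hβ
    exact ⟨γ, (mem_iInter.1 hγ) n, h1, h2⟩

lemma isClubIn_inter (hcof : Cardinal.aleph0 < k.cof) {X Y : Set Ordinal}
    (hX : IsClubIn X k) (hY : IsClubIn Y k) : IsClubIn (X ∩ Y) k := by
  have := isClubIn_iInter hcof (fun n => Nat.casesOn n X fun _ => Y)
    (by intro n; cases n with | zero => exact hX | succ m => exact hY)
  have heq : (⋂ n, (Nat.casesOn n X fun _ => Y : Set Ordinal)) = X ∩ Y := by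
    ext z
    simp only [mem_iInter, mem_inter_iff]
    constructor
    · intro h; exact ⟨h 0, h 1⟩
    · rintro ⟨h1, h2⟩ n; cases n with | zero => exact h1 | succ m => exact h2
  rwa [heq] at this

lemma mem_clubFilter_of_club {C : Set Ordinal} (hC : IsClubIn C k) :
    {x : ↥(Set.Iio k) | ↑x ∈ C} ∈ clubFilter k :=
  Filter.mem_generate_iff.2 ⟨{{x : ↥(Set.Iio k) | ↑x ∈ C}}, by
    simpa using ⟨C, hC, rfl⟩, Set.finite_singleton _, by simp⟩

lemma exists_club_of_mem (hcof : Cardinal.aleph0 < k.cof) {S : Set ↥(Set.Iio k)}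
    (hS : S ∈ clubFilter k) :
    ∃ C : Set Ordinal, IsClubIn C k ∧ ∀ x : ↥(Set.Iio k), ↑x ∈ C → x ∈ S := by
  obtain ⟨t, hts, htf, hsub⟩ := Filter.mem_generate_iff.1 hS
  suffices h : ∃ C : Set Ordinal, IsClubIn C k ∧ ∀ x : ↥(Set.Iio k), ↑x ∈ C → x ∈ ⋂₀ t by
    obtain ⟨C, h1, h2⟩ := h
    exact ⟨C, h1, fun x hx => hsub (h2 x hx)⟩
  clear hsub hS
  revert hts
  refine Set.Finite.induction_on (motive := fun u _ =>
      u ⊆ {S : Set ↥(Set.Iio k) | ∃ C : Set Ordinal, IsClubIn C k ∧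
        S = {x : ↥(Set.Iio k) | ↑x ∈ C}} →
      ∃ C : Set Ordinal, IsClubIn C k ∧ ∀ x : ↥(Set.Iio k), ↑x ∈ C → x ∈ ⋂₀ u)
    t htf ?_ ?_
  · exact fun _ => ⟨Set.Iio k, isClubIn_Iio k, by simp⟩
  · intro a s ha hs ih hts
    obtain ⟨Ca, hCa, hEq⟩ := hts (Set.mem_insert a s)
    obtain ⟨C, hC1, hC2⟩ := ih (fun z hz => hts (Set.mem_insert_of_mem a hz))
    refine ⟨Ca ∩ C, isClubIn_inter hcof hCa hC1, ?_⟩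
    intro x hx
    rw [Set.sInter_insert]
    exact ⟨hEq ▸ (hx.1 : ↑x ∈ Ca), hC2 x hx.2⟩

lemma clubFilter_iInter (hcof : Cardinal.aleph0 < k.cof) (S : ℕ → Set ↥(Set.Iio k))
    (hS : ∀ n, S n ∈ clubFilter k) : (⋂ n, S n) ∈ clubFilter k := by
  classical
  choose C hC1 hC2 using fun n => exists_club_of_mem hcof (hS n)
  have hclub := isClubIn_iInter hcof C hC1
  refine Filter.mem_of_superset (mem_clubFilter_of_club hclub) ?_
  intro x hx
  rw [mem_iInter]
  intro n
  exact hC2 n x ((mem_iInter.1 hx) n)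

lemma nonempty_of_mem_clubFilter (hcof : Cardinal.aleph0 < k.cof) {S : Set ↥(Set.Iio k)}
    (hS : S ∈ clubFilter k) : S.Nonempty := by
  obtain ⟨C, hC, hsub⟩ := exists_club_of_mem hcof hS
  have hk : Order.IsSuccLimit k := Ordinal.aleph0_le_cof.1 hcof.le
  obtain ⟨γ, hγC, _⟩ := hC.2.1 0 hk.pos
  exact ⟨⟨γ, hC.1 hγC⟩, hsub _ hγC⟩

lemma ltD_clubFilter_wf (hcof : Cardinal.aleph0 < k.cof) :
    WellFounded (ltD (clubFilter k)) := by
  constructor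
  intro f
  by_contra hf
  have hstep : ∀ x : {g : ↥(Set.Iio k) → Ordinal // ¬Acc (ltD (clubFilter k)) g},
      ∃ y : {g // ¬Acc (ltD (clubFilter k)) g}, ltD (clubFilter k) y.1 x.1 := by
    rintro ⟨x, hx⟩
    obtain ⟨b, hb1, hb2⟩ := exists_not_acc_lt_of_not_acc hx
    exact ⟨⟨b, hb1⟩, hb2⟩
  choose F hF using hstep
  set g : ℕ → (↥(Set.Iio k) → Ordinal) := fun n => (F^[n] ⟨f, hf⟩).1 with hg
  have hdescD : ∀ n, ltD (clubFilter k) (g (n + 1)) (g n) := by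
    intro n
    have : F^[n + 1] ⟨f, hf⟩ = F (F^[n] ⟨f, hf⟩) := Function.iterate_succ_apply' F n _
    rw [hg]
    simp only [this]
    exact hF _
  obtain ⟨x, hx⟩ := nonempty_of_mem_clubFilter hcof
    (clubFilter_iInter hcof (fun n => {y | g (n + 1) y < g n y}) hdescD)
  have hdesc : ∀ n, g (n + 1) x < g n x := fun n => (mem_iInter.1 hx) n
  exact (RelEmbedding.wellFounded_iff_isEmpty.1 Ordinal.lt_wf).false
    (RelEmbedding.natGT (fun n => g n x) hdesc)

end Clubs

section Rank

variable {Y : Type 1} {D : Filter Y}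

lemma rkD_eq (wf : WellFounded (ltD D)) (f : Y → Ordinal.{0}) :
    rkD D f = (wf.apply f).rank := by
  rw [rkD, dif_pos (wf.apply f)]

lemma rkD_lt_of_ltD (wf : WellFounded (ltD D)) {g f : Y → Ordinal.{0}}
    (h : ltD D g f) : rkD D g < rkD D f := by
  rw [rkD_eq wf, rkD_eq wf]
  exact Acc.rank_lt_of_rel (wf.apply f) h

lemma exists_pred_of_lt_rkD (wf : WellFounded (ltD D)) {g : Y → Ordinal.{0}}
    {β : Ordinal.{1}} (h : β < rkD D g) :
    ∃ h' : Y → Ordinal.{0}, ltD D h' g ∧ β ≤ rkD D h' := by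
  rw [rkD_eq wf, Acc.rank_eq, Ordinal.lt_iSup_iff] at h
  obtain ⟨⟨b, hb⟩, hlt⟩ := h
  refine ⟨b, hb, ?_⟩
  rw [Order.lt_succ_iff] at hlt
  rwa [rkD_eq wf]

lemma rkD_mono (wf : WellFounded (ltD D)) {g f : Y → Ordinal.{0}}
    (h : {y | g y ≤ f y} ∈ D) : rkD D g ≤ rkD D f := by
  by_contra hc
  rw [not_le] at hc
  obtain ⟨h', hh1, hh2⟩ := exists_pred_of_lt_rkD wf hc
  have hltf : ltD D h' f := by
    refine Filter.mem_of_superset (Filter.inter_mem hh1 h) ?_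
    intro y hy
    simp only [Set.mem_inter_iff, Set.mem_setOf_eq] at hy
    exact lt_of_lt_of_le hy.1 hy.2
  exact absurd (lt_of_le_of_lt hh2 (rkD_lt_of_ltD wf hltf)) (lt_irrefl _)

lemma rkD_congr (wf : WellFounded (ltD D)) {g f : Y → Ordinal.{0}}
    (h : {y | g y = f y} ∈ D) : rkD D g = rkD D f := by
  refine le_antisymm (rkD_mono wf ?_) (rkD_mono wf ?_)
  · exact Filter.mem_of_superset h fun y hy => le_of_eq hy
  · refine Filter.mem_of_superset h fun y hy => ?_
    have h2 : g y = f y := hy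
    exact le_of_eq h2.symm

end Rank

section Chain

lemma isClubIn_Ioi {k j : Ordinal} (hk : Order.IsSuccLimit k) (hj : j < k) :
    IsClubIn {γ | j < γ ∧ γ < k} k := by
  refine ⟨fun γ hγ => hγ.2, ?_, ?_⟩
  · intro β hβ
    rcases le_or_gt β j with h | h
    · exact ⟨Order.succ j, ⟨Order.lt_succ j, hk.succ_lt hj⟩, h.trans (Order.le_succ j)⟩
    · exact ⟨β, ⟨h, hβ⟩, le_rfl⟩
  · intro δ hδk hδlim hdense
    obtain ⟨γ, hγ, _, hγδ⟩ := hdense 0 hδlim.pos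
    exact ⟨hγ.1.trans hγδ, hδk⟩

lemma exists_surjOn (lam : Cardinal.{0}) {α : Ordinal.{0}} (h0 : 0 < α)
    (hcard : α.card ≤ lam) :
    ∃ u : Ordinal → Ordinal, (∀ ζ, u ζ < α) ∧ ∀ β < α, ∃ ζ < lam.ord, u ζ = β := by
  classical
  have hmk : Cardinal.mk ↥(Set.Iio α) ≤ Cardinal.mk ↥(Set.Iio lam.ord) := by
    rw [Ordinal.mk_Iio_ordinal, Ordinal.mk_Iio_ordinal, Cardinal.card_ord]
    exact Cardinal.lift_le.2 hcard
  obtain ⟨e⟩ := (Cardinal.le_def _ _).1 hmk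
  set u : Ordinal → Ordinal := fun ζ =>
    if h : ∃ b : ↥(Set.Iio α), ((e b : ↥(Set.Iio lam.ord)) : Ordinal) = ζ
    then (h.choose : Ordinal) else 0 with hu
  refine ⟨u, ?_, ?_⟩
  · intro ζ
    rw [hu]
    simp only []
    by_cases h : ∃ b : ↥(Set.Iio α), ((e b : ↥(Set.Iio lam.ord)) : Ordinal) = ζ
    · rw [dif_pos h]; exact h.choose.2
    · rw [dif_neg h]; exact h0
  · intro β hβ
    set b : ↥(Set.Iio α) := ⟨β, hβ⟩ with hb
    refine ⟨(e b : Ordinal), (e b).2, ?_⟩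
    have hex : ∃ b' : ↥(Set.Iio α), ((e b' : ↥(Set.Iio lam.ord)) : Ordinal) = (e b : Ordinal) :=
      ⟨b, rfl⟩
    rw [hu]
    simp only [dif_pos hex]
    have h1 : e hex.choose = e b := Subtype.ext hex.choose_spec
    have h2 : hex.choose = b := e.injective h1
    rw [h2]

noncomputable def chainF (k : Ordinal.{0}) (L : Ordinal → Cardinal.{0})
    (U : Ordinal → Ordinal → Ordinal) : Ordinal.{0} → (↥(Set.Iio k) → Ordinal.{0}) :=
  Ordinal.lt_wf.fix fun α ih =>
    haveI := Classical.dec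
    if h : ∀ ζ, U α ζ < α then
      (fun i : ↥(Set.Iio k) => if Cardinal.aleph0 ≤ L ↑i then
        (Ordinal.bsup (L ↑i).ord fun ζ _ => ih (U α ζ) (h ζ) i) + 1
      else 0)
    else fun _ => 0

lemma chainF_eq (k : Ordinal.{0}) (L : Ordinal → Cardinal.{0})
    (U : Ordinal → Ordinal → Ordinal) (α : Ordinal) :
    chainF k L U α =
      haveI := Classical.dec
      if h : ∀ ζ, U α ζ < α then
        (fun i : ↥(Set.Iio k) => if Cardinal.aleph0 ≤ L ↑i then
          (Ordinal.bsup (L ↑i).ord fun ζ _ => chainF k L U (U α ζ) i) + 1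
        else 0)
      else fun _ => 0 := by
  exact WellFounded.fix_eq _ _ _

end Chain

/-- let `λ` be a singular cardinal of uncountable cofinality `κ`,
`⟨λ_i : i < κ⟩` an increasing continuous sequence of cardinals with supremum `λ`, and `D`
the club filter on `κ`.  Then every ordinal `α < λ⁺` equals `rk_D f` for some
`f ∈ ∏_{i<κ} λ_i⁺`; in particular `rk_D ⟨λ_i⁺ : i < κ⟩ ≥ λ⁺`. -/
theorem stmt16 (lam κ : Cardinal.{0})
    (hκunc : Cardinal.aleph0 < κ) (hsing : κ < lam) (hcof : lam.ord.cof = κ)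
    (L : Ordinal → Cardinal.{0})
    (hmono : ∀ i j, i < j → j < κ.ord → L i < L j)
    (hcont : ∀ i < κ.ord, Order.IsSuccLimit i → L i = sSup (L '' Set.Iio i))
    (hsup : lam = sSup (L '' Set.Iio κ.ord)) :
    (∀ α < (Order.succ lam).ord, ∃ f : ↥(Set.Iio κ.ord) → Ordinal,
        (∀ i : ↥(Set.Iio κ.ord), f i < (Order.succ (L ↑i)).ord) ∧
        rkD (clubFilter κ.ord) f = Ordinal.lift.{1, 0} α) ∧
    Ordinal.lift.{1, 0} (Order.succ lam).ord ≤
      rkD (clubFilter κ.ord) (fun i : ↥(Set.Iio κ.ord) => (Order.succ (L ↑i)).ord) := by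
  classical
  set k : Ordinal := κ.ord with hkdef
  set D : Filter ↥(Set.Iio k) := clubFilter k with hDdef
  -- κ is regular
  have hkcof : k.cof = κ := by
    have h1 := Ordinal.cof_cof lam.ord
    rw [hcof] at h1
    exact h1
  have hk : Cardinal.aleph0 < k.cof := by rw [hkcof]; exact hκunc
  have wf : WellFounded (ltD D) := ltD_clubFilter_wf hk
  have hklim : Order.IsSuccLimit k := Cardinal.isSuccLimit_ord hκunc.le
  -- L is bounded by lam
  have hLlam : ∀ i, i < k → L i < lam := by
    intro i hi
    have h2 : L (Order.succ i) ≤ lam := by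
      rw [hsup]
      refine le_csSup ?_ ⟨Order.succ i, hklim.succ_lt hi, rfl⟩
      rw [Cardinal.bddAbove_iff_small]
      exact small_image L (Set.Iio k)
    exact lt_of_lt_of_le (hmono i (Order.succ i) (Order.lt_succ i) (hklim.succ_lt hi)) h2
  have hgetj : ∀ c, c < lam → ∃ j, j < k ∧ c < L j := by
    intro c hc
    by_contra hcon
    push_neg at hcon
    have : lam ≤ c := by
      rw [hsup]
      refine csSup_le ⟨L 0, 0, hklim.pos, rfl⟩ ?_
      rintro _ ⟨j, hj, rfl⟩
      exact hcon j hj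
    exact absurd (hc.trans_le this) (lt_irrefl _)
  have hmemTail : ∀ j, j < k → {x : ↥(Set.Iio k) | j < ↑x} ∈ D := by
    intro j hj
    refine Filter.mem_of_superset (mem_clubFilter_of_club (isClubIn_Ioi hklim hj)) ?_
    intro x hx
    exact (hx : j < ↑x ∧ (x : Ordinal) < k).1
  have hLbig : ∀ c, c < lam → {x : ↥(Set.Iio k) | c < L ↑x} ∈ D := by
    intro c hc
    obtain ⟨j, hj, hcj⟩ := hgetj c hc
    refine Filter.mem_of_superset (hmemTail j hj) ?_
    intro x hx
    exact hcj.trans (hmono j ↑x hx x.2)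
  have haleph0 : {x : ↥(Set.Iio k) | Cardinal.aleph0 ≤ L ↑x} ∈ D := by
    refine Filter.mem_of_superset (hLbig Cardinal.aleph0 (hκunc.trans hsing)) ?_
    intro x hx
    have h2 : Cardinal.aleph0 < L ↑x := hx
    exact (h2.le : Cardinal.aleph0 ≤ L ↑x)
  -- ordinal positivity
  have hord0 : ∀ c : Cardinal.{0}, (0 : Ordinal) < (Order.succ c).ord := by
    intro c
    rw [Cardinal.lt_ord]
    simpa using lt_of_le_of_lt (zero_le c) (Order.lt_succ c)
  -- the enumerating functions
  have hUex : ∀ α : Ordinal.{0}, ∃ u : Ordinal → Ordinal,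
      (0 < α → α < (Order.succ lam).ord →
        (∀ ζ, u ζ < α) ∧ ∀ β < α, ∃ ζ < lam.ord, u ζ = β) := by
    intro α
    by_cases h : 0 < α ∧ α < (Order.succ lam).ord
    · have hcard : α.card ≤ lam := by
        have := Cardinal.lt_ord.1 h.2
        exact Order.lt_succ_iff.1 this
      obtain ⟨u, hu1, hu2⟩ := exists_surjOn lam h.1 hcard
      exact ⟨u, fun _ _ => ⟨hu1, hu2⟩⟩
    · exact ⟨fun _ => 0, fun h1 h2 => absurd ⟨h1, h2⟩ h⟩
  choose U hU using hUex
  set F : Ordinal → (↥(Set.Iio k) → Ordinal) := chainF k L U with hFdef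
  have hFpos : ∀ α, 0 < α → α < (Order.succ lam).ord →
      F α = fun i : ↥(Set.Iio k) => if Cardinal.aleph0 ≤ L ↑i then
        (Ordinal.bsup (L ↑i).ord fun ζ _ => F (U α ζ) i) + 1 else 0 := by
    intro α h1 h2
    rw [hFdef, chainF_eq]
    rw [dif_pos ((hU α h1 h2).1)]
  have hF0 : F 0 = fun _ => 0 := by
    rw [hFdef, chainF_eq]
    rw [dif_neg]
    intro hcon
    exact absurd (hcon 0) (not_lt_of_ge zero_le)
  -- main chain properties
  have main : ∀ α, α < (Order.succ lam).ord →
      (∀ i : ↥(Set.Iio k), F α i < (Order.succ (L ↑i)).ord) ∧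
      (∀ β, β < α → ltD D (F β) (F α)) := by
    intro α
    induction α using Ordinal.induction with
    | h α IH =>
      intro hα
      rcases (zero_le : (0 : Ordinal) ≤ α).eq_or_lt with rfl | hpos
      · rw [hF0]
        exact ⟨fun i => hord0 (L ↑i), fun β hβ => absurd hβ (not_lt_of_ge zero_le)⟩
      constructor
      · intro i
        have hFαi : F α i = if Cardinal.aleph0 ≤ L ↑i then
            (Ordinal.bsup (L ↑i).ord fun ζ _ => F (U α ζ) i) + 1 else 0 := by
          rw [hFpos α hpos hα]
        rw [hFαi]
        by_cases hi : Cardinal.aleph0 ≤ L ↑i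
        · rw [if_pos hi]
          have hreg : (Order.succ (L ↑i)).IsRegular := Cardinal.isRegular_succ hi
          have hb : (Ordinal.bsup (L ↑i).ord fun ζ _ => F (U α ζ) i)
              < (Order.succ (L ↑i)).ord := by
            refine Cardinal.bsup_lt_ord_of_isRegular hreg ?_ ?_
            · rw [Cardinal.card_ord]; exact Order.lt_succ _
            · intro ζ hζ
              exact (IH (U α ζ) ((hU α hpos hα).1 ζ) (((hU α hpos hα).1 ζ).trans hα)).1 i
          rw [Ordinal.add_one_eq_succ]
          exact (Cardinal.isSuccLimit_ord (hi.trans (Order.le_succ _))).succ_lt hb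
        · rw [if_neg hi]
          exact hord0 (L ↑i)
      · intro β hβα
        obtain ⟨ζ₀, hζ₀lam, hζ₀eq⟩ := (hU α hpos hα).2 β hβα
        have hcardζ : ζ₀.card < lam := Cardinal.lt_ord.1 hζ₀lam
        refine Filter.mem_of_superset (Filter.inter_mem haleph0 (hLbig ζ₀.card hcardζ)) ?_
        rintro x ⟨hx1, hx2⟩
        have ha : Cardinal.aleph0 ≤ L ↑x := hx1
        have hζord : ζ₀ < (L ↑x).ord := Cardinal.lt_ord.2 hx2
        have hFαx : F α x = (Ordinal.bsup (L ↑x).ord fun ζ _ => F (U α ζ) x) + 1 := by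
          have : F α x = if Cardinal.aleph0 ≤ L ↑x then
              (Ordinal.bsup (L ↑x).ord fun ζ _ => F (U α ζ) x) + 1 else 0 := by
            rw [hFpos α hpos hα]
          rw [this, if_pos ha]
        show F β x < F α x
        rw [hFαx, ← hζ₀eq]
        refine lt_of_le_of_lt (Ordinal.le_bsup (fun ζ _ => F (U α ζ) x) ζ₀ hζord) ?_
        rw [Ordinal.add_one_eq_succ]
        exact Order.lt_succ _
  -- rank lower bound
  have hrank : ∀ α, α < (Order.succ lam).ord → Ordinal.lift.{1, 0} α ≤ rkD D (F α) := by
    intro α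
    induction α using Ordinal.induction with
    | h α IH =>
      intro hα
      by_contra hc
      rw [not_le] at hc
      obtain ⟨β, hβα, hβeq⟩ := Ordinal.lt_lift_iff.1 hc
      have h1 : Ordinal.lift.{1, 0} β ≤ rkD D (F β) := IH β hβα (hβα.trans hα)
      have h2 : rkD D (F β) < rkD D (F α) :=
        rkD_lt_of_ltD wf ((main α hα).2 β hβα)
      rw [← hβeq] at h2
      exact absurd (h1.trans_lt h2) (lt_irrefl _)
  -- attainment of all smaller ranks within the product
  have hatt : ∀ g : ↥(Set.Iio k) → Ordinal,
      (∀ i : ↥(Set.Iio k), g i < (Order.succ (L ↑i)).ord) →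
      ∀ β, β ≤ rkD D g →
      ∃ h : ↥(Set.Iio k) → Ordinal,
        (∀ i : ↥(Set.Iio k), h i < (Order.succ (L ↑i)).ord) ∧ rkD D h = β := by
    intro g
    refine wf.induction (C := fun g =>
      (∀ i : ↥(Set.Iio k), g i < (Order.succ (L ↑i)).ord) →
      ∀ β, β ≤ rkD D g →
      ∃ h : ↥(Set.Iio k) → Ordinal,
        (∀ i : ↥(Set.Iio k), h i < (Order.succ (L ↑i)).ord) ∧ rkD D h = β) g ?_
    intro g IH hprod β hβ
    rcases eq_or_lt_of_le hβ with he | hlt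
    · exact ⟨g, hprod, he.symm⟩
    obtain ⟨h', hh'g, hβh'⟩ := exists_pred_of_lt_rkD wf hlt
    set h : ↥(Set.Iio k) → Ordinal := fun i => if h' i < g i then h' i else 0 with hdef
    have hhprod : ∀ i : ↥(Set.Iio k), h i < (Order.succ (L ↑i)).ord := by
      intro i
      simp only [hdef]
      by_cases hcase : h' i < g i
      · rw [if_pos hcase]; exact (hprod i).trans' hcase
      · rw [if_neg hcase]; exact hord0 (L ↑i)
    have hhg : ltD D h g := by
      refine Filter.mem_of_superset hh'g ?_
      intro y hy
      have hy' : h' y < g y := hy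
      show h y < g y
      simp only [hdef]
      rw [if_pos hy']
      exact hy'
    have hEq : rkD D h = rkD D h' := by
      refine rkD_congr wf (Filter.mem_of_superset hh'g ?_)
      intro y hy
      have hy' : h' y < g y := hy
      show h y = h' y
      simp only [hdef]
      rw [if_pos hy']
    exact IH h hhg hhprod β (by rw [hEq]; exact hβh')
  constructor
  · intro α hα
    exact hatt (F α) (main α hα).1 (Ordinal.lift.{1, 0} α) (hrank α hα)
  · -- the top function
    set G : ↥(Set.Iio k) → Ordinal := fun i => (Order.succ (L ↑i)).ord with hGdef
    have hltG : ∀ α, α < (Order.succ lam).ord → ltD D (F α) G := by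
      intro α hα
      exact Filter.univ_mem' fun x => (main α hα).1 x
    by_contra hc
    rw [not_le] at hc
    obtain ⟨β, hβ, hβeq⟩ := Ordinal.lt_lift_iff.1 hc
    have h1 : Ordinal.lift.{1, 0} β ≤ rkD D (F β) := hrank β hβ
    have h2 : rkD D (F β) < rkD D G := rkD_lt_of_ltD wf (hltG β hβ)
    rw [← hβeq] at h2
    exact absurd (h1.trans_lt h2) (lt_irrefl _)
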